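/- Let P be the triadic Cantor distribution with ratio r ∈ (0, 1/3), and let κ = {(r+1)/(6−2r), (5−3r)/(6−2r)} be the conditional means of P on [0,1/2] and [1/2,1]. Then the distortion error V(P; κ) = ∫ min_{a∈κ}(x−a)² dP(x) equals (−7r³ + 13r² − 9r + 3)/(6(r−3)²(r+1)). -/

import Mathlib

open MeasureTheory
open scoped ENNReal

/-- The similarity mappings `S_j(x) = r x + ((j-1)/2)(1-r)`, indexed by `j : Fin 3`
(so `j = 0, 1, 2` corresponds to `j = 1, 2, 3` in the paper). -/
noncomputable def Smap (r : ℝ) (j : Fin 3) (x : ℝ) : ℝ := r * x + (j : ℝ) / 2 * (1 - r)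

/-- For a word `σ = σ₁ ⋯ σ_k` over the alphabet, the composition `S_σ = S_{σ₁} ∘ ⋯ ∘ S_{σ_k}`. -/
noncomputable def Sword (r : ℝ) {k : ℕ} (σ : Fin k → Fin 3) : ℝ → ℝ :=
  fun x => (List.ofFn σ).foldr (fun j y => Smap r j y) x

/-- The cylinder interval `J_σ = S_σ([0,1])`. -/
noncomputable def cylJ (r : ℝ) {k : ℕ} (σ : Fin k → Fin 3) : Set ℝ :=
  Set.image (Sword r σ) (Set.Icc (0 : ℝ) 1)

/-- The conditional mean `E(X | X ∈ A)` of a random variable with distribution `P`. -/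
noncomputable def condMean (P : Measure ℝ) (A : Set ℝ) : ℝ :=
  (P A).toReal⁻¹ * ∫ x in A, x ∂P


open Set

section aux
variable {r : ℝ} (hr0 : 0 < r) (hr1 : r < 1/3)
  (P : Measure ℝ) [IsProbabilityMeasure P]
  (hP : P = (3 : ℝ≥0∞)⁻¹ •
    (P.map (Smap r 0) + P.map (Smap r 1) + P.map (Smap r 2)))

lemma smap_meas (j : Fin 3) : Measurable (Smap r j) := by
  unfold Smap; fun_prop

lemma smap_cont (j : Fin 3) : Continuous (Smap r j) := by
  unfold Smap; fun_prop


lemma smap_eval0 (r x : ℝ) : Smap r 0 x = r * x + 0 := by simp [Smap]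
lemma smap_eval1 (r x : ℝ) : Smap r 1 x = r * x + (1-r)/2 := by
  show r * x + ((1:Fin 3):ℝ)/2 * (1-r) = _
  norm_num
  ring
lemma smap_eval2 (r x : ℝ) : Smap r 2 x = r * x + (1-r) := by
  show r * x + ((2:Fin 3):ℝ)/2 * (1-r) = _
  norm_num


include hr0 hr1 hP

lemma step_lower {t : ℝ} (ht : t < 0) : P (Iic t) ≤ P (Iic (t / r)) := by
  have hterm : ∀ j : Fin 3, (P.map (Smap r j)) (Iic t) ≤ P (Iic (t / r)) := by
    intro j
    rw [Measure.map_apply (smap_meas _) measurableSet_Iic]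
    refine measure_mono ?_
    intro x hx
    simp only [mem_preimage, mem_Iic, Smap] at hx ⊢
    have hj : (0:ℝ) ≤ (j:ℝ) := by positivity
    rw [le_div_iff₀ hr0]
    nlinarith
  calc P (Iic t) = 3⁻¹ * ((P.map (Smap r 0)) (Iic t) + (P.map (Smap r 1)) (Iic t)
        + (P.map (Smap r 2)) (Iic t)) := by
        conv_lhs => rw [hP]
        simp only [Measure.smul_apply, Measure.add_apply, smul_eq_mul]
    _ ≤ 3⁻¹ * (P (Iic (t/r)) + P (Iic (t/r)) + P (Iic (t/r))) :=
        mul_le_mul_right (add_le_add (add_le_add (hterm 0) (hterm 1)) (hterm 2)) _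
    _ = P (Iic (t/r)) := by
        rw [show P (Iic (t/r)) + P (Iic (t/r)) + P (Iic (t/r)) = 3 * P (Iic (t/r)) by ring,
          ← mul_assoc, ENNReal.inv_mul_cancel (by norm_num) (by norm_num), one_mul]

lemma lower_n {t : ℝ} (ht : t < 0) : ∀ n : ℕ, P (Iic t) ≤ P (Iic (t / r ^ n)) := by
  intro n
  induction n with
  | zero => simp
  | succ n ih =>
    refine ih.trans ?_
    have h1 : t / r ^ n < 0 := div_neg_of_neg_of_pos ht (by positivity)
    have := step_lower hr0 hr1 P hP h1
    rwa [div_div, ← pow_succ] at this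

lemma P_Iic_zero {t : ℝ} (ht : t < 0) : P (Iic t) = 0 := by
  have hrlt1 : r < 1 := by linarith
  have hanti : Antitone (fun n : ℕ => Iic (t / r ^ n)) := by
    intro m n hmn
    apply Iic_subset_Iic.2
    rw [div_le_div_iff₀ (by positivity) (by positivity)]
    have : r ^ n ≤ r ^ m := pow_le_pow_of_le_one hr0.le hrlt1.le hmn
    nlinarith
  have hint : ⋂ n : ℕ, Iic (t / r ^ n) = ∅ := by
    rw [eq_empty_iff_forall_notMem]
    intro x hx
    simp only [mem_iInter, mem_Iic] at hx
    rcases le_or_gt 0 x with h0 | h0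
    · have := hx 0; simp at this; linarith
    · obtain ⟨n, hn⟩ := exists_pow_lt_of_lt_one (div_pos_of_neg_of_neg ht h0) hrlt1
      have h1 : x * r ^ n ≤ t := (le_div_iff₀ (by positivity)).1 (hx n)
      have h2 : t < r ^ n * x := by
        have h3 := mul_lt_mul_of_neg_right hn h0
        rwa [div_mul_cancel₀ t (ne_of_lt h0)] at h3
      nlinarith
  have htend := tendsto_measure_iInter_atTop (μ := P) (s := fun n : ℕ => Iic (t / r ^ n))
    (fun n => measurableSet_Iic.nullMeasurableSet) hanti ⟨0, measure_ne_top P _⟩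
  rw [hint] at htend
  simp only [measure_empty] at htend
  exact le_antisymm (ge_of_tendsto' htend (lower_n hr0 hr1 P hP ht)) zero_le

lemma step_upper {t : ℝ} (ht : 1 < t) : P (Ici t) ≤ P (Ici (1 + (t - 1) / r)) := by
  have hterm : ∀ j : Fin 3, (P.map (Smap r j)) (Ici t) ≤ P (Ici (1 + (t - 1) / r)) := by
    intro j
    rw [Measure.map_apply (smap_meas _) measurableSet_Ici]
    refine measure_mono ?_
    intro x hx
    simp only [mem_preimage, mem_Ici, Smap] at hx ⊢
    have hj : (j:ℝ) ≤ 2 := by exact_mod_cast Nat.cast_le.2 j.is_le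
    have h4 : (t - 1) / r ≤ x - 1 := by
      rw [div_le_iff₀ hr0]; nlinarith
    linarith
  calc P (Ici t) = 3⁻¹ * ((P.map (Smap r 0)) (Ici t) + (P.map (Smap r 1)) (Ici t)
        + (P.map (Smap r 2)) (Ici t)) := by
        conv_lhs => rw [hP]
        simp only [Measure.smul_apply, Measure.add_apply, smul_eq_mul]
    _ ≤ 3⁻¹ * (P (Ici (1+(t-1)/r)) + P (Ici (1+(t-1)/r)) + P (Ici (1+(t-1)/r))) :=
        mul_le_mul_right (add_le_add (add_le_add (hterm 0) (hterm 1)) (hterm 2)) _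
    _ = P (Ici (1+(t-1)/r)) := by
        rw [show P (Ici (1+(t-1)/r)) + P (Ici (1+(t-1)/r)) + P (Ici (1+(t-1)/r))
            = 3 * P (Ici (1+(t-1)/r)) by ring,
          ← mul_assoc, ENNReal.inv_mul_cancel (by norm_num) (by norm_num), one_mul]

lemma upper_n {t : ℝ} (ht : 1 < t) : ∀ n : ℕ, P (Ici t) ≤ P (Ici (1 + (t - 1) / r ^ n)) := by
  intro n
  induction n with
  | zero => simp
  | succ n ih =>
    refine ih.trans ?_
    have h1 : 1 < 1 + (t - 1) / r ^ n := by
      have : 0 < (t-1)/r^n := div_pos (by linarith) (by positivity)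
      linarith
    have := step_upper hr0 hr1 P hP h1
    rw [show 1 + (t-1)/r^n - 1 = (t-1)/r^n by ring, div_div, ← pow_succ] at this
    exact this

lemma P_Ici_zero {t : ℝ} (ht : 1 < t) : P (Ici t) = 0 := by
  have hrlt1 : r < 1 := by linarith
  have hanti : Antitone (fun n : ℕ => Ici (1 + (t - 1) / r ^ n)) := by
    intro m n hmn
    apply Ici_subset_Ici.2
    have h2 : (t-1)/r^m ≤ (t-1)/r^n := by
      rw [div_le_div_iff₀ (by positivity) (by positivity)]
      have : r ^ n ≤ r ^ m := pow_le_pow_of_le_one hr0.le hrlt1.le hmn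
      nlinarith
    linarith
  have hint : ⋂ n : ℕ, Ici (1 + (t - 1) / r ^ n) = ∅ := by
    rw [eq_empty_iff_forall_notMem]
    intro x hx
    simp only [mem_iInter, mem_Ici] at hx
    rcases le_or_gt x 1 with h0 | h0
    · have := hx 0; simp at this; linarith
    · obtain ⟨n, hn⟩ := exists_pow_lt_of_lt_one
        (div_pos (show (0:ℝ) < t-1 by linarith) (show (0:ℝ) < x-1 by linarith)) hrlt1
      have h1 : (t-1) ≤ (x-1) * r ^ n := by
        rw [← div_le_iff₀ (by positivity)]; linarith [hx n]
      have h2 : r ^ n * (x-1) < t - 1 := by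
        have h3 := mul_lt_mul_of_pos_right hn (show (0:ℝ) < x-1 by linarith)
        rwa [div_mul_cancel₀ (t-1) (by linarith : x - 1 ≠ 0)] at h3
      nlinarith
  have htend := tendsto_measure_iInter_atTop (μ := P) (s := fun n : ℕ => Ici (1 + (t - 1) / r ^ n))
    (fun n => measurableSet_Ici.nullMeasurableSet) hanti ⟨0, measure_ne_top P _⟩
  rw [hint] at htend
  simp only [measure_empty] at htend
  exact le_antisymm (ge_of_tendsto' htend (upper_n hr0 hr1 P hP ht)) zero_le

lemma P_supp : ∀ᵐ x ∂P, x ∈ Icc (0:ℝ) 1 := by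
  rw [ae_iff]
  have hsub : {x : ℝ | ¬ x ∈ Icc (0:ℝ) 1} ⊆
      (⋃ n : ℕ, Iic (-(1/((n:ℝ)+1)))) ∪ ⋃ n : ℕ, Ici (1 + 1/((n:ℝ)+1)) := by
    intro x hx
    simp only [mem_setOf_eq, mem_Icc, not_and_or, not_le] at hx
    rcases hx with hx | hx
    · left
      obtain ⟨n, hn⟩ := exists_nat_one_div_lt (show 0 < -x by linarith)
      exact mem_iUnion.2 ⟨n, by simp only [mem_Iic]; linarith⟩
    · right
      obtain ⟨n, hn⟩ := exists_nat_one_div_lt (show 0 < x - 1 by linarith)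
      exact mem_iUnion.2 ⟨n, by simp only [mem_Ici]; linarith⟩
  refine measure_mono_null hsub (measure_union_null ?_ ?_)
  · refine measure_iUnion_null fun n => P_Iic_zero hr0 hr1 P hP ?_
    have : (0:ℝ) < 1/((n:ℝ)+1) := by positivity
    linarith
  · refine measure_iUnion_null fun n => P_Ici_zero hr0 hr1 P hP ?_
    have : (0:ℝ) < 1/((n:ℝ)+1) := by positivity
    linarith

include hr0 hr1 hP

lemma P_integ (f : ℝ → ℝ) (hf : Continuous f) {C : ℝ}
    (hb : ∀ x ∈ Icc (0:ℝ) 1, |f x| ≤ C) : Integrable f P :=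
  (integrable_const C).mono' hf.aestronglyMeasurable
    ((P_supp hr0 hr1 P hP).mono fun x hx => by
      rw [Real.norm_eq_abs]; exact hb x hx)

lemma smap_mapsto (j : Fin 3) : ∀ x ∈ Icc (0:ℝ) 1, Smap r j x ∈ Icc (0:ℝ) 1 := by
  intro j' hx
  simp only [mem_Icc, Smap] at hx ⊢
  have hj0 : (0:ℝ) ≤ (j:ℝ) := by positivity
  have hj2 : (j:ℝ) ≤ 2 := by exact_mod_cast Nat.cast_le.2 j.is_le
  constructor <;> nlinarith [hx.1, hx.2]

lemma P_key (f : ℝ → ℝ) (hf : Continuous f) {C : ℝ}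
    (hb : ∀ x ∈ Icc (0:ℝ) 1, |f x| ≤ C) :
    ∫ x, f x ∂P = (1/3) * ((∫ x, f (Smap r 0 x) ∂P) + (∫ x, f (Smap r 1 x) ∂P)
      + (∫ x, f (Smap r 2 x) ∂P)) := by
  have hint : ∀ j : Fin 3, Integrable (fun x => f (Smap r j x)) P := fun j =>
    P_integ hr0 hr1 P hP _ (hf.comp (smap_cont j))
      (fun x hx => hb _ (smap_mapsto hr0 hr1 P hP j x hx))
  have hintm : ∀ j : Fin 3, Integrable f (P.map (Smap r j)) := fun j =>
    (integrable_map_measure hf.aestronglyMeasurable (smap_meas j).aemeasurable).2 (hint j)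
  conv_lhs => rw [hP]
  rw [integral_smul_measure,
    integral_add_measure ((hintm 0).add_measure (hintm 1)) (hintm 2),
    integral_add_measure (hintm 0) (hintm 1),
    integral_map (smap_meas 0).aemeasurable hf.aestronglyMeasurable,
    integral_map (smap_meas 1).aemeasurable hf.aestronglyMeasurable,
    integral_map (smap_meas 2).aemeasurable hf.aestronglyMeasurable,
    show ((3:ℝ≥0∞)⁻¹).toReal = (1/3:ℝ) by norm_num, smul_eq_mul]

lemma hi1 : Integrable (fun x : ℝ => x) P :=
  P_integ hr0 hr1 P hP _ continuous_id (C := 1)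
    (fun x hx => abs_le.2 ⟨by linarith [hx.1], hx.2⟩)

lemma hi2 : Integrable (fun x : ℝ => x^2) P :=
  P_integ hr0 hr1 P hP _ (by fun_prop) (C := 1)
    (fun x hx => abs_le.2 ⟨by nlinarith [hx.1, hx.2], by nlinarith [hx.1, hx.2]⟩)

lemma hiabs : Integrable (fun x : ℝ => |x - 1/2|) P :=
  P_integ hr0 hr1 P hP _ (by fun_prop) (C := 1)
    (fun x hx => by rw [abs_abs]; exact abs_le.2 ⟨by linarith [hx.1], by linarith [hx.2]⟩)

lemma lin_int (c : ℝ) : ∫ x, (r * x + c) ∂P = r * (∫ x, x ∂P) + c := by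
  have h1 : Integrable (fun x : ℝ => r * x) P := (hi1 hr0 hr1 P hP).const_mul r
  rw [integral_add h1 (integrable_const c), integral_const_mul, integral_const]
  simp

lemma P_m1 : ∫ x, x ∂P = 1/2 := by
  have h := P_key hr0 hr1 P hP (fun x => x) continuous_id (C := 1)
    (fun x hx => abs_le.2 ⟨by linarith [hx.1], hx.2⟩)
  simp only [smap_eval0, smap_eval1, smap_eval2] at h
  rw [lin_int hr0 hr1 P hP, lin_int hr0 hr1 P hP, lin_int hr0 hr1 P hP] at h
  have key : (1-r) * (∫ x, x ∂P) = (1-r) * (1/2) := by linear_combination h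
  exact mul_left_cancel₀ (by linarith : (1:ℝ)-r ≠ 0) key

lemma sq_int (c : ℝ) : ∫ x, (r * x + c)^2 ∂P
    = r^2 * (∫ x, x^2 ∂P) + 2*r*c * (∫ x, x ∂P) + c^2 := by
  simp_rw [show ∀ x : ℝ, (r*x+c)^2 = r^2*x^2 + (2*r*c)*x + c^2 from fun x => by ring]
  have h1 : Integrable (fun x : ℝ => r^2 * x^2) P := (hi2 hr0 hr1 P hP).const_mul _
  have h2 : Integrable (fun x : ℝ => (2*r*c) * x) P := (hi1 hr0 hr1 P hP).const_mul _
  have h12 : Integrable (fun x : ℝ => r^2 * x^2 + (2*r*c) * x) P := h1.add h2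
  rw [integral_add h12 (integrable_const _), integral_add h1 h2,
    integral_const_mul, integral_const_mul, integral_const]
  simp

lemma P_m2 : ∫ x, x^2 ∂P = (r+5)/(12*(1+r)) := by
  have h := P_key hr0 hr1 P hP (fun x => x^2) (by fun_prop) (C := 1)
    (fun x hx => by
      show |x^2| ≤ 1
      obtain ⟨h1, h2⟩ := hx
      rw [abs_le]; constructor <;> nlinarith)
  simp only [smap_eval0, smap_eval1, smap_eval2] at h
  rw [sq_int hr0 hr1 P hP, sq_int hr0 hr1 P hP, sq_int hr0 hr1 P hP,
    P_m1 hr0 hr1 P hP] at h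
  have hne : (1:ℝ) - r^2 ≠ 0 := by nlinarith
  have key : (1-r^2) * (∫ x, x^2 ∂P) = (1-r^2) * ((r+5)/(12*(1+r))) := by
    rw [show (1-r^2) * ((r+5)/(12*(1+r))) = (1-r)*(r+5)/12 by
      field_simp; ring]
    linear_combination h
  exact mul_left_cancel₀ hne key

lemma P_mabs : ∫ x, |x - 1/2| ∂P = (1-r)/(3-r) := by
  have h := P_key hr0 hr1 P hP (fun x => |x - 1/2|) (by fun_prop) (C := 1)
    (fun x hx => by
      obtain ⟨h1, h2⟩ := hx
      simp only [abs_abs]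
      rw [abs_le]; constructor <;> linarith)
  simp only [smap_eval0, smap_eval1, smap_eval2] at h
  have e0 : (fun x : ℝ => |r*x + 0 - 1/2|) =ᵐ[P] (fun x => 1/2 - r*x) := by
    filter_upwards [P_supp hr0 hr1 P hP] with x hx
    obtain ⟨h1, h2⟩ := hx
    rw [abs_of_nonpos (by nlinarith : r*x + 0 - 1/2 ≤ 0)]; ring
  have t0 : ∫ x, |r*x + 0 - 1/2| ∂P = 1/2 - r * (1/2) := by
    have hc : Integrable (fun x : ℝ => r * x) P := (hi1 hr0 hr1 P hP).const_mul r
    rw [integral_congr_ae e0, integral_sub (integrable_const _) hc,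
      integral_const_mul, integral_const, P_m1 hr0 hr1 P hP]
    simp
  have e1 : (fun x : ℝ => |r*x + (1-r)/2 - 1/2|) = (fun x => r * |x - 1/2|) := by
    funext x
    rw [show r*x + (1-r)/2 - 1/2 = r*(x - 1/2) by ring, abs_mul, abs_of_pos hr0]
  have t1 : ∫ x, |r*x + (1-r)/2 - 1/2| ∂P = r * ∫ x, |x - 1/2| ∂P := by
    rw [e1, integral_const_mul]
  have e2 : (fun x : ℝ => |r*x + (1-r) - 1/2|) =ᵐ[P] (fun x => r*x + (1/2 - r)) := by
    filter_upwards [P_supp hr0 hr1 P hP] with x hx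
    obtain ⟨h1, h2⟩ := hx
    rw [abs_of_nonneg (by nlinarith : (0:ℝ) ≤ r*x + (1-r) - 1/2)]; ring
  have t2 : ∫ x, |r*x + (1-r) - 1/2| ∂P = r * (1/2) + (1/2 - r) := by
    rw [integral_congr_ae e2, lin_int hr0 hr1 P hP, P_m1 hr0 hr1 P hP]
  rw [t0, t1, t2] at h
  have key : (3-r) * (∫ x, |x - 1/2| ∂P) = 1 - r := by linear_combination 3*h
  rw [eq_div_iff (by linarith : (3:ℝ)-r ≠ 0)]
  linear_combination key

lemma final : ∫ x, min ((x - (r + 1) / (6 - 2*r))^2) ((x - (5 - 3*r) / (6 - 2*r))^2) ∂P =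
      (-7*r^3 + 13*r^2 - 9*r + 3) / (6 * (r - 3)^2 * (r + 1)) := by
  set a : ℝ := (r + 1) / (6 - 2*r) with ha
  set b : ℝ := (5 - 3*r) / (6 - 2*r) with hb
  have h6 : (6:ℝ) - 2*r ≠ 0 := by linarith
  have hab : a + b = 1 := by rw [ha, hb, ← add_div, div_eq_one_iff_eq h6]; ring
  have hab' : a ≤ b := by
    rw [ha, hb, div_le_div_iff₀ (by linarith) (by linarith)]
    nlinarith
  have hpt : ∀ x : ℝ, min ((x - a)^2) ((x - b)^2)
      = x^2 - x + (a^2+b^2)/2 - (b-a)*|x - 1/2| := by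
    intro x
    rcases le_total x (1/2) with hx | hx
    · rw [min_eq_left (by nlinarith : (x-a)^2 ≤ (x-b)^2),
        abs_of_nonpos (by linarith : x - 1/2 ≤ 0)]
      linear_combination (-x - (b-a)/2) * hab
    · rw [min_eq_right (by nlinarith : (x-b)^2 ≤ (x-a)^2),
        abs_of_nonneg (by linarith : (0:ℝ) ≤ x - 1/2)]
      linear_combination (-x + (b-a)/2) * hab
  rw [integral_congr_ae (Filter.Eventually.of_forall hpt)]
  have hA : Integrable (fun x : ℝ => x^2 - x) P := (hi2 hr0 hr1 P hP).sub (hi1 hr0 hr1 P hP)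
  have hB : Integrable (fun x : ℝ => x^2 - x + (a^2+b^2)/2) P := hA.add (integrable_const _)
  have hC : Integrable (fun x : ℝ => (b-a) * |x - 1/2|) P := (hiabs hr0 hr1 P hP).const_mul _
  rw [integral_sub hB hC, integral_add hA (integrable_const _),
    integral_sub (hi2 hr0 hr1 P hP) (hi1 hr0 hr1 P hP),
    integral_const_mul, integral_const,
    P_m1 hr0 hr1 P hP, P_m2 hr0 hr1 P hP, P_mabs hr0 hr1 P hP]
  simp only [measure_univ, probReal_univ, ENNReal.toReal_one, smul_eq_mul, one_mul]
  rw [ha, hb]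
  have h1 : (1:ℝ) + r ≠ 0 := by linarith
  have h3 : (3:ℝ) - r ≠ 0 := by linarith
  have h3' : (r:ℝ) - 3 ≠ 0 := by linarith
  rw [show (6:ℝ) - 2*r = 2*(3-r) by ring]
  field_simp
  ring


end aux

theorem stmt_6 (r : ℝ) (hr0 : 0 < r) (hr1 : r < 1/3)
    (P : Measure ℝ) [IsProbabilityMeasure P]
    (hP : P = (3 : ℝ≥0∞)⁻¹ •
      (P.map (Smap r 0) + P.map (Smap r 1) + P.map (Smap r 2))) :
    ∫ x, min ((x - (r + 1) / (6 - 2*r))^2) ((x - (5 - 3*r) / (6 - 2*r))^2) ∂P =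
      (-7*r^3 + 13*r^2 - 9*r + 3) / (6 * (r - 3)^2 * (r + 1)) := by
  exact final hr0 hr1 P hP
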